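/- Let T : S_n(ℝ) → S_n(ℝ) be a linear transformation such that T(A) is positive definite whenever A is positive definite, and such that T(E_ii) = E_ii for every i = 1, …, n. Then there exists a positive semi-definite real symmetric matrix H with all diagonal entries equal to 1 such that T(A) = H ∘ A for every A ∈ S_n(ℝ); moreover H = T(𝟏), where 𝟏 is the n×n matrix all of whose entries equal 1. -/

import Mathlib

open Matrix

/-- The space `Sₙ(ℝ)` of `n × n` real symmetric matrices, as a submodule of the space of
all `n × n` real matrices. -/
def SymMat (n : ℕ) : Submodule ℝ (Matrix (Fin n) (Fin n) ℝ) where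
  carrier := {A | A.IsSymm}
  add_mem' := fun ha hb => ha.add hb
  zero_mem' := by simp [Matrix.IsSymm]
  smul_mem' := fun c _ hA => hA.smul c

/-- The matrix unit `E_ii`, as an element of `Sₙ(ℝ)`. -/
def symE (n : ℕ) (i : Fin n) : SymMat n :=
  ⟨Matrix.single i i 1,
    Matrix.IsSymm.ext fun a b => by simp [Matrix.single, and_comm]⟩

/-- The all-ones matrix `𝟏`, as an element of `Sₙ(ℝ)`. -/
def symOnes (n : ℕ) : SymMat n :=
  ⟨Matrix.of fun _ _ => (1 : ℝ), Matrix.IsSymm.ext fun _ _ => rfl⟩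

/- ### Auxiliary definitions and lemmas -/

/-- The symmetrized matrix unit `E_ij + E_ji`, as an element of `Sₙ(ℝ)`. -/
def symG (n : ℕ) (i j : Fin n) : SymMat n :=
  ⟨Matrix.single i j 1 + Matrix.single j i 1,
    Matrix.IsSymm.ext fun a b => by
      simp [Matrix.single, and_comm, add_comm]⟩

lemma symG_comm {n : ℕ} (i j : Fin n) : symG n i j = symG n j i :=
  Subtype.ext (add_comm _ _)

lemma symG_diag {n : ℕ} (k : Fin n) : symG n k k = (2:ℝ) • symE n k := by
  apply Subtype.ext
  show Matrix.single k k 1 + Matrix.single k k 1 = _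
  rw [← two_smul ℝ]
  rfl

lemma symId_coe {n : ℕ} : ((∑ i, symE n i : SymMat n) : Matrix (Fin n) (Fin n) ℝ) = 1 := by
  push_cast
  ext a b
  simp [symE, Matrix.single, Matrix.one_apply, Matrix.sum_apply, ite_and,
    Finset.sum_ite_eq, eq_comm]

lemma symm_apply {n : ℕ} (A : SymMat n) (q r : Fin n) :
    (A : Matrix (Fin n) (Fin n) ℝ) r q = (A : Matrix (Fin n) (Fin n) ℝ) q r := by
  have h := A.2
  exact congrFun (congrFun h q) r |>.symm ▸ rfl

lemma dot_stdBasis {n : ℕ} (i j : Fin n) (x y : Fin n → ℝ) :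
    x ⬝ᵥ (Matrix.single i j (1:ℝ)) *ᵥ y = x i * y j := by
  simp [Matrix.single, Matrix.mulVec, dotProduct, ite_and,
    Finset.mul_sum, Finset.sum_ite_eq, Finset.sum_ite_eq']

lemma outer_psd {n : ℕ} (v : Fin n → ℝ) : (Matrix.of fun q r => v q * v r).PosSemidef := by
  refine Matrix.PosSemidef.of_dotProduct_mulVec_nonneg ?_ ?_
  · ext q r; simp [Matrix.conjTranspose, mul_comm]
  · intro x
    have h : (Matrix.of fun q r => v q * v r) *ᵥ x = (v ⬝ᵥ x) • v := by
      ext q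
      simp only [Matrix.mulVec, dotProduct, Matrix.of_apply, Pi.smul_apply,
        smul_eq_mul, Finset.sum_mul, Finset.mul_sum]
      exact Finset.sum_congr rfl fun i _ => by ring
    rw [h]
    have h2 : star x ⬝ᵥ (v ⬝ᵥ x) • v = (v ⬝ᵥ x) * (x ⬝ᵥ v) := by
      simp [dotProduct_smul]
    rw [h2, dotProduct_comm]
    exact mul_self_nonneg _

lemma dotProduct_self_pos' {n : ℕ} (x : Fin n → ℝ) (hx : x ≠ 0) : 0 < x ⬝ᵥ x :=
  lt_of_le_of_ne (Finset.sum_nonneg fun _ _ => mul_self_nonneg _)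
    (Ne.symm fun h => hx ((dotProduct_self_eq_zero).mp h))

lemma quad_zero {c b : ℝ} (hc : 0 ≤ c) (h : ∀ ε : ℝ, 0 ≤ ε^2*c + ε*b) : b = 0 := by
  have hc1 : (0:ℝ) < c + 1 := by linarith
  set ε := -b/(c+1) with hεdef
  have hε2 : ε * (c+1) = -b := by rw [hεdef, div_mul_cancel₀ _ hc1.ne']
  have h1 := h ε
  have he : ε^2 * c + ε * b = -(ε^2) := by
    have hb : b = -(ε*(c+1)) := by linarith
    rw [hb]; ring
  rw [he] at h1
  have hε0 : ε = 0 := by nlinarith [sq_nonneg ε]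
  rw [hε0] at hε2; linarith

lemma polar {n : ℕ} (B : Matrix (Fin n) (Fin n) ℝ) (u v : Fin n → ℝ) :
    (u + v) ⬝ᵥ B *ᵥ (u + v)
      = u ⬝ᵥ B *ᵥ u + v ⬝ᵥ B *ᵥ v + (u ⬝ᵥ B *ᵥ v + v ⬝ᵥ B *ᵥ u) := by
  simp [add_dotProduct, dotProduct_add, Matrix.mulVec_add]
  ring

lemma single_dot {n : ℕ} (B : Matrix (Fin n) (Fin n) ℝ) (q r : Fin n) :
    Pi.single q (1:ℝ) ⬝ᵥ B *ᵥ Pi.single r 1 = B q r := by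
  simp [Matrix.mulVec_single, single_dotProduct]

/-- `T` maps positive semidefinite matrices to positive semidefinite matrices. -/
lemma T_psd {n : ℕ} (T : SymMat n →ₗ[ℝ] SymMat n)
    (hT : ∀ A : SymMat n, (A : Matrix (Fin n) (Fin n) ℝ).PosDef →
      ((T A : Matrix (Fin n) (Fin n) ℝ)).PosDef)
    (hE : ∀ i : Fin n, T (symE n i) = symE n i)
    (A : SymMat n) (hA : (A : Matrix (Fin n) (Fin n) ℝ).PosSemidef) :
    ((T A : Matrix (Fin n) (Fin n) ℝ)).PosSemidef := by
  have hsymm : ((T A : Matrix (Fin n) (Fin n) ℝ)).IsSymm := (T A).2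
  refine Matrix.PosSemidef.of_dotProduct_mulVec_nonneg hsymm fun x => ?_
  rcases eq_or_ne x 0 with rfl | hx
  · simp
  have hxx : 0 < x ⬝ᵥ x := dotProduct_self_pos' x hx
  set Id : SymMat n := ∑ i, symE n i with hId
  have hTId : T Id = Id := by rw [hId, map_sum]; simp [hE]
  have key : ∀ ε : ℝ, 0 < ε →
      0 < x ⬝ᵥ (T A : Matrix (Fin n) (Fin n) ℝ) *ᵥ x + ε * (x ⬝ᵥ x) := by
    intro ε hε
    have hPD : ((A + ε • Id : SymMat n) : Matrix (Fin n) (Fin n) ℝ).PosDef := by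
      have hco : ((A + ε • Id : SymMat n) : Matrix (Fin n) (Fin n) ℝ)
          = (A : Matrix (Fin n) (Fin n) ℝ) + ε • (1 : Matrix (Fin n) (Fin n) ℝ) := by
        push_cast
        rw [hId, symId_coe]
      rw [hco]
      refine Matrix.PosDef.of_dotProduct_mulVec_pos (hA.1.add ?_) fun y hy => ?_
      · simp [Matrix.IsHermitian]
      · have h1 := hA.dotProduct_mulVec_nonneg y
        have h2 : y ⬝ᵥ (ε • (1 : Matrix (Fin n) (Fin n) ℝ)) *ᵥ y = ε * (y ⬝ᵥ y) := by
          simp [Matrix.smul_mulVec, Matrix.one_mulVec]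
        have h3 : 0 < y ⬝ᵥ y := dotProduct_self_pos' y hy
        simp only [Matrix.add_mulVec, dotProduct_add, star_trivial] at *
        rw [h2]
        nlinarith
    have := (hT _ hPD).dotProduct_mulVec_pos (x := x) fun h => hx (by simpa using h)
    rw [map_add, LinearMap.map_smul, hTId] at this
    have hco2 : ((T A + ε • Id : SymMat n) : Matrix (Fin n) (Fin n) ℝ)
        = (T A : Matrix (Fin n) (Fin n) ℝ) + ε • (1 : Matrix (Fin n) (Fin n) ℝ) := by
      push_cast
      rw [hId, symId_coe]
    rw [hco2] at this
    simpa [Matrix.add_mulVec, dotProduct_add, Matrix.smul_mulVec,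
      Matrix.one_mulVec] using this
  rw [star_trivial]
  by_contra hneg
  push_neg at hneg
  set v := x ⬝ᵥ (T A : Matrix (Fin n) (Fin n) ℝ) *ᵥ x with hv
  have hthis := key (-v / (2 * (x ⬝ᵥ x))) (div_pos (by linarith) (by linarith))
  have heq : -v / (2 * (x ⬝ᵥ x)) * (x ⬝ᵥ x) = -v / 2 := by
    field_simp
  rw [heq] at hthis
  linarith

/-- The quadratic form of `T(E_ij + E_ji)` vanishes on vectors whose `l`-th coordinate is 0. -/
lemma claim_aux {n : ℕ} (T : SymMat n →ₗ[ℝ] SymMat n)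
    (hT : ∀ A : SymMat n, (A : Matrix (Fin n) (Fin n) ℝ).PosDef →
      ((T A : Matrix (Fin n) (Fin n) ℝ)).PosDef)
    (hE : ∀ i : Fin n, T (symE n i) = symE n i)
    {k l : Fin n} (hkl : k ≠ l) (x : Fin n → ℝ) (hx : x l = 0) :
    x ⬝ᵥ (T (symG n k l) : Matrix (Fin n) (Fin n) ℝ) *ᵥ x = 0 := by
  set b := x ⬝ᵥ (T (symG n k l) : Matrix (Fin n) (Fin n) ℝ) *ᵥ x with hb
  refine quad_zero (mul_self_nonneg (x k)) fun ε => ?_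
  set v : Fin n → ℝ := fun q => if q = k then ε else if q = l then 1 else 0 with hv
  have hco : ((ε^2 • symE n k + ε • symG n k l + symE n l : SymMat n) :
      Matrix (Fin n) (Fin n) ℝ) = Matrix.of fun q r => v q * v r := by
    push_cast
    ext q r
    simp only [symE, symG, Matrix.single, Matrix.add_apply, Matrix.smul_apply,
      Matrix.of_apply, smul_eq_mul, hv]
    by_cases hq : q = k <;> by_cases hr : r = k <;> by_cases hq2 : q = l <;>
      by_cases hr2 : r = l <;> simp_all [Ne.symm hkl, eq_comm] <;> ring
  have hpsd := T_psd T hT hE _ (hco ▸ outer_psd v)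
  have hTc : T (ε^2 • symE n k + ε • symG n k l + symE n l)
      = ε^2 • symE n k + ε • T (symG n k l) + symE n l := by
    simp only [map_add, LinearMap.map_smul, hE]
  rw [hTc] at hpsd
  have hval := hpsd.dotProduct_mulVec_nonneg x
  rw [star_trivial] at hval
  have hform : x ⬝ᵥ ((ε^2 • symE n k + ε • T (symG n k l) + symE n l : SymMat n) :
      Matrix (Fin n) (Fin n) ℝ) *ᵥ x = ε^2 * (x k * x k) + ε * b := by
    push_cast
    simp only [Matrix.add_mulVec, dotProduct_add, Matrix.smul_mulVec,
      dotProduct_smul, smul_eq_mul]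
    have e1 : x ⬝ᵥ ((symE n k : SymMat n) : Matrix (Fin n) (Fin n) ℝ) *ᵥ x = x k * x k :=
      dot_stdBasis k k x x
    have e2 : x ⬝ᵥ ((symE n l : SymMat n) : Matrix (Fin n) (Fin n) ℝ) *ᵥ x = x l * x l :=
      dot_stdBasis l l x x
    rw [e1, e2, hx, ← hb]
    ring
  rw [hform] at hval
  exact hval

/-- Off the positions `(k,l)` and `(l,k)`, the matrix `T(E_kl + E_lk)` vanishes. -/
lemma entry_zero {n : ℕ} (T : SymMat n →ₗ[ℝ] SymMat n)
    (hT : ∀ A : SymMat n, (A : Matrix (Fin n) (Fin n) ℝ).PosDef →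
      ((T A : Matrix (Fin n) (Fin n) ℝ)).PosDef)
    (hE : ∀ i : Fin n, T (symE n i) = symE n i)
    {k l q r : Fin n} (hkl : k ≠ l)
    (h1 : ¬(q = k ∧ r = l)) (h2 : ¬(q = l ∧ r = k)) :
    (T (symG n k l) : Matrix (Fin n) (Fin n) ℝ) q r = 0 := by
  set B := (T (symG n k l) : Matrix (Fin n) (Fin n) ℝ) with hB
  have hBsym : ∀ a c, B c a = B a c := fun a c => symm_apply (T (symG n k l)) a c
  have c1 : ∀ x : Fin n → ℝ, x l = 0 → x ⬝ᵥ B *ᵥ x = 0 := fun x hx =>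
    claim_aux T hT hE hkl x hx
  have c2 : ∀ x : Fin n → ℝ, x k = 0 → x ⬝ᵥ B *ᵥ x = 0 := by
    intro x hx
    have := claim_aux T hT hE (Ne.symm hkl) x hx
    rwa [symG_comm l k] at this
  have key : ∀ m : Fin n, q ≠ m → r ≠ m →
      (∀ x : Fin n → ℝ, x m = 0 → x ⬝ᵥ B *ᵥ x = 0) → B q r = 0 := by
    intro m hq hr hc
    have e1 := hc (Pi.single q 1 + Pi.single r 1)
      (by simp [Pi.single_eq_of_ne (Ne.symm hq), Pi.single_eq_of_ne (Ne.symm hr)])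
    have e2 := hc (Pi.single q 1) (Pi.single_eq_of_ne (Ne.symm hq) 1)
    have e3 := hc (Pi.single r 1) (Pi.single_eq_of_ne (Ne.symm hr) 1)
    rw [polar, e2, e3, single_dot, single_dot] at e1
    have := hBsym q r
    linarith
  have hcase : (q ≠ l ∧ r ≠ l) ∨ (q ≠ k ∧ r ≠ k) := by
    by_cases hql : q = l
    · subst hql
      exact Or.inr ⟨Ne.symm hkl, fun hrk => h2 ⟨rfl, hrk⟩⟩
    · by_cases hrl : r = l
      · subst hrl
        exact Or.inr ⟨fun hqk => h1 ⟨hqk, rfl⟩, Ne.symm hkl⟩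
      · exact Or.inl ⟨hql, hrl⟩
  rcases hcase with ⟨hq, hr⟩ | ⟨hq, hr⟩
  · exact key l hq hr c1
  · exact key k hq hr c2

/-- Every symmetric matrix decomposes through the `symG`'s. -/
lemma decomp {n : ℕ} (A : SymMat n) :
    A = (2⁻¹ : ℝ) • ∑ p : Fin n × Fin n,
        (A : Matrix (Fin n) (Fin n) ℝ) p.1 p.2 • symG n p.1 p.2 := by
  apply Subtype.ext
  push_cast
  ext q r
  rw [Matrix.smul_apply, Matrix.sum_apply]
  have : ∀ p : Fin n × Fin n,
      ((A : Matrix (Fin n) (Fin n) ℝ) p.1 p.2 •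
        ((symG n p.1 p.2 : SymMat n) : Matrix (Fin n) (Fin n) ℝ)) q r
      = (A : Matrix (Fin n) (Fin n) ℝ) p.1 p.2 *
        ((if p.1 = q ∧ p.2 = r then 1 else 0) + (if p.2 = q ∧ p.1 = r then 1 else 0)) := by
    intro p
    simp [symG, Matrix.single]
  rw [Finset.sum_congr rfl fun p _ => this p]
  rw [Fintype.sum_prod_type]
  simp only [mul_add, Finset.sum_add_distrib, mul_ite, mul_one, mul_zero, ite_and]
  simp only [Finset.sum_ite_eq', Finset.mem_univ, if_true]
  rw [symm_apply A q r, smul_eq_mul, Finset.sum_comm]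
  simp only [Finset.sum_ite_eq', Finset.mem_univ, if_true]
  ring

/-- The coefficient attached to the pair `(k,l)`. -/
noncomputable def coefF {n : ℕ} (T : SymMat n →ₗ[ℝ] SymMat n) (k l : Fin n) : ℝ :=
  if k = l then 1 else (T (symG n k l) : Matrix (Fin n) (Fin n) ℝ) k l

lemma coefF_symm {n : ℕ} (T : SymMat n →ₗ[ℝ] SymMat n) (k l : Fin n) :
    coefF T l k = coefF T k l := by
  unfold coefF
  by_cases hkl : k = l
  · simp [hkl]
  · rw [if_neg (Ne.symm hkl), if_neg hkl, symG_comm l k]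
    exact symm_apply (T (symG n k l)) k l

lemma T_symG {n : ℕ} (T : SymMat n →ₗ[ℝ] SymMat n)
    (hT : ∀ A : SymMat n, (A : Matrix (Fin n) (Fin n) ℝ).PosDef →
      ((T A : Matrix (Fin n) (Fin n) ℝ)).PosDef)
    (hE : ∀ i : Fin n, T (symE n i) = symE n i)
    (k l : Fin n) : T (symG n k l) = coefF T k l • symG n k l := by
  by_cases hkl : k = l
  · subst hkl
    rw [symG_diag, LinearMap.map_smul, hE, ← symG_diag]
    simp [coefF]
  · apply Subtype.ext
    push_cast
    ext q r
    rw [Matrix.smul_apply]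
    by_cases h1 : q = k ∧ r = l
    · obtain ⟨rfl, rfl⟩ := h1
      simp [coefF, hkl, symG, Matrix.single, Ne.symm hkl]
    · by_cases h2 : q = l ∧ r = k
      · rw [h2.1, h2.2, symm_apply (T (symG n k l)) k l]
        simp [coefF, hkl, symG, Matrix.single, Ne.symm hkl]
      · rw [entry_zero T hT hE hkl h1 h2]
        have hG : ((symG n k l : SymMat n) : Matrix (Fin n) (Fin n) ℝ) q r = 0 := by
          simp only [symG, Matrix.single, Matrix.add_apply, Matrix.of_apply]
          rw [if_neg, if_neg]
          · simp
          · exact fun h => h2 ⟨h.1.symm, h.2.symm⟩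
          · exact fun h => h1 ⟨h.1.symm, h.2.symm⟩
        rw [hG, smul_zero]

/-- Let `T : Sₙ(ℝ) → Sₙ(ℝ)` be linear, preserving positive definiteness,
with `T(E_ii) = E_ii` for all `i`.  Then there is a positive semi-definite symmetric matrix
`H` with unit diagonal such that `T(A) = H ∘ A` for all `A`; moreover `H = T(𝟏)` where `𝟏`
is the all-ones matrix. -/
theorem stmt13 (n : ℕ) (T : SymMat n →ₗ[ℝ] SymMat n)
    (hT : ∀ A : SymMat n, (A : Matrix (Fin n) (Fin n) ℝ).PosDef →
      ((T A : Matrix (Fin n) (Fin n) ℝ)).PosDef)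
    (hE : ∀ i : Fin n, T (symE n i) = symE n i) :
    ∃ H : Matrix (Fin n) (Fin n) ℝ, H.PosSemidef ∧ (∀ i, H i i = 1) ∧
      (∀ A : SymMat n,
        (T A : Matrix (Fin n) (Fin n) ℝ) = H.hadamard (A : Matrix (Fin n) (Fin n) ℝ)) ∧
      H = (T (symOnes n) : Matrix (Fin n) (Fin n) ℝ) := by
  classical
  set H : Matrix (Fin n) (Fin n) ℝ := Matrix.of fun q r => coefF T q r with hH
  have hGapp : ∀ k l q r : Fin n, ((symG n k l : SymMat n) : Matrix (Fin n) (Fin n) ℝ) q r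
      = (if k = q ∧ l = r then (1:ℝ) else 0) + (if l = q ∧ k = r then 1 else 0) := fun _ _ _ _ => rfl
  have h3 : ∀ A : SymMat n,
      (T A : Matrix (Fin n) (Fin n) ℝ) = H.hadamard (A : Matrix (Fin n) (Fin n) ℝ) := by
    intro A
    conv_lhs => rw [decomp A, LinearMap.map_smul, map_sum]
    simp only [LinearMap.map_smul, T_symG T hT hE]
    push_cast
    ext q r
    rw [Matrix.smul_apply, Matrix.sum_apply]
    simp only [Matrix.smul_apply, smul_eq_mul, hGapp]
    rw [Fintype.sum_prod_type]
    simp only [mul_add, Finset.sum_add_distrib, mul_ite, mul_one, mul_zero, ite_and]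
    simp only [Finset.sum_ite_eq', Finset.mem_univ, if_true]
    rw [Finset.sum_comm]
    simp only [Finset.sum_ite_eq', Finset.mem_univ, if_true]
    rw [symm_apply A q r, coefF_symm T q r]
    show _ = coefF T q r * _
    ring
  have h4 : H = (T (symOnes n) : Matrix (Fin n) (Fin n) ℝ) := by
    rw [h3 (symOnes n)]
    ext q r
    have h1 : ((symOnes n : SymMat n) : Matrix (Fin n) (Fin n) ℝ) q r = 1 := rfl
    rw [Matrix.hadamard_apply, h1, mul_one]
  refine ⟨H, ?_, ?_, h3, h4⟩
  · rw [h4]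
    apply T_psd T hT hE
    have hco : ((symOnes n : SymMat n) : Matrix (Fin n) (Fin n) ℝ)
        = Matrix.of fun q r => (fun _ : Fin n => (1:ℝ)) q * (fun _ : Fin n => (1:ℝ)) r := by
      ext q r
      simp [symOnes]
    rw [hco]
    exact outer_psd _
  · intro i
    show coefF T i i = 1
    simp [coefF]
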